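/- For n ≥ 1, the algebra of diagonal invariants C[x_1,…,x_n,y_1,…,y_n]^{S_n} (for the action of S_n permuting the x_i and y_i simultaneously) is generated as a C-algebra by the multisymmetric power sums p_{a,b} = x_1^a y_1^b + … + x_n^a y_n^b with a, b ≥ 0 and a + b ≤ n. -/

import Mathlib

open MvPolynomial Finset

namespace DiagInv

/-- multisymmetric power sum -/
noncomputable def pp (n a b : ℕ) : MvPolynomial (Fin n × Bool) ℂ :=
  ∑ i : Fin n, X (i, false) ^ a * X (i, true) ^ b

/-- monomial attached to an exponent vector -/
noncomputable def M (n : ℕ) (f : Fin n → ℕ × ℕ) : MvPolynomial (Fin n × Bool) ℂ :=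
  ∏ i : Fin n, X (i, false) ^ (f i).1 * X (i, true) ^ (f i).2

/-- symmetrized monomial -/
noncomputable def S (n : ℕ) (f : Fin n → ℕ × ℕ) : MvPolynomial (Fin n × Bool) ℂ :=
  ∑ σ : Equiv.Perm (Fin n), M n (f ∘ σ)

/-- target algebra: adjoin of bounded power sums -/
noncomputable def A (n : ℕ) : Subalgebra ℂ (MvPolynomial (Fin n × Bool) ℂ) :=
  Algebra.adjoin ℂ
    { q | ∃ a b : ℕ, a + b ≤ n ∧ q = ∑ i : Fin n, X (i, false) ^ a * X (i, true) ^ b }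

/-- adjoin of all power sums -/
noncomputable def Afull (n : ℕ) : Subalgebra ℂ (MvPolynomial (Fin n × Bool) ℂ) :=
  Algebra.adjoin ℂ (Set.range fun ab : ℕ × ℕ => pp n ab.1 ab.2)

lemma pp_mem_Afull (n a b : ℕ) : pp n a b ∈ Afull n :=
  Algebra.subset_adjoin ⟨(a, b), rfl⟩

/-! ### Newton / polarization part -/

/-- embedding of the x-variables -/
noncomputable def φ (n : ℕ) : MvPolynomial (Fin n) ℂ →ₐ[ℂ] MvPolynomial (Fin n × Bool) ℂ :=
  aeval (fun i => X (i, false))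

lemma phi_psum (n k : ℕ) : φ n (psum (Fin n) ℂ k) = pp n k 0 := by
  simp [φ, psum, pp]

/-- elementary symmetric polys lie in the adjoin of the bounded power sums -/
lemma esymm_eq_zero_of_lt (n k : ℕ) (h : n < k) : esymm (Fin n) ℂ k = 0 := by
  rw [esymm, Finset.powersetCard_eq_empty.mpr (by simpa using h), Finset.sum_empty]

lemma esymm_mem (n : ℕ) : ∀ k, k ≤ n →
    esymm (Fin n) ℂ k ∈ Algebra.adjoin ℂ { q | ∃ j ≤ n, q = psum (Fin n) ℂ j } := by
  intro k
  induction k using Nat.strong_induction_on with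
  | _ k ih =>
    intro hk
    rcases Nat.eq_zero_or_pos k with hk0 | hk0
    · subst hk0; rw [esymm_zero]; exact one_mem _
    have hrec := mul_esymm_eq_sum (Fin n) ℂ k
    have hsmul : (k : ℂ) • esymm (Fin n) ℂ k =
        (-1) ^ (k + 1) *
          ∑ a ∈ antidiagonal k with a.1 < k,
            (-1) ^ a.1 * esymm (Fin n) ℂ a.1 * psum (Fin n) ℂ a.2 := by
      rw [← hrec, Algebra.smul_def, algebraMap_eq, map_natCast]
    have hmem : (-1) ^ (k + 1) *
          ∑ a ∈ antidiagonal k with a.1 < k,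
            (-1) ^ a.1 * esymm (Fin n) ℂ a.1 * psum (Fin n) ℂ a.2 ∈
        Algebra.adjoin ℂ { q | ∃ j ≤ n, q = psum (Fin n) ℂ j } := by
      refine mul_mem (pow_mem (neg_mem (one_mem _)) _) (Subalgebra.sum_mem _ fun a ha => ?_)
      rw [Finset.mem_filter, Finset.HasAntidiagonal.mem_antidiagonal] at ha
      refine mul_mem (mul_mem (pow_mem (neg_mem (one_mem _)) _) ?_) ?_
      · exact ih a.1 ha.2 (le_trans (le_of_lt ha.2) hk)
      · exact Algebra.subset_adjoin ⟨a.2, by omega, rfl⟩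
    have : esymm (Fin n) ℂ k = (k : ℂ)⁻¹ • ((k : ℂ) • esymm (Fin n) ℂ k) := by
      rw [smul_smul, inv_mul_cancel₀ (by exact_mod_cast hk0.ne'), one_smul]
    rw [this, hsmul]
    exact Subalgebra.smul_mem _ hmem _

lemma psum_mem (n : ℕ) : ∀ k,
    psum (Fin n) ℂ k ∈ Algebra.adjoin ℂ { q | ∃ j ≤ n, q = psum (Fin n) ℂ j } := by
  intro k
  induction k using Nat.strong_induction_on with
  | _ k ih =>
    rcases le_or_gt k n with hk | hk
    · exact Algebra.subset_adjoin ⟨k, hk, rfl⟩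
    have hk0 : 0 < k := lt_of_le_of_lt (Nat.zero_le n) hk
    rw [psum_eq_mul_esymm_sub_sum (Fin n) ℂ k hk0, esymm_eq_zero_of_lt n k hk, mul_zero]
    refine sub_mem (zero_mem _) (Subalgebra.sum_mem _ fun a ha => ?_)
    rw [Finset.mem_filter, Finset.HasAntidiagonal.mem_antidiagonal] at ha
    have hsum := ha.1
    have h0 : 0 < a.1 := ha.2.1
    refine mul_mem (mul_mem (pow_mem (neg_mem (one_mem _)) _) ?_) (ih a.2 (by omega))
    rcases le_or_gt a.1 n with h1 | h1
    · exact esymm_mem n a.1 h1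
    · rw [esymm_eq_zero_of_lt n a.1 h1]; exact zero_mem _

lemma pp_k0_mem_A (n k : ℕ) : pp n k 0 ∈ A n := by
  have h := psum_mem n k
  have h2 : φ n (psum (Fin n) ℂ k) ∈
      (Algebra.adjoin ℂ { q | ∃ j ≤ n, q = psum (Fin n) ℂ j }).map (φ n) :=
    ⟨_, h, rfl⟩
  rw [AlgHom.map_adjoin, phi_psum] at h2
  refine Algebra.adjoin_le ?_ h2
  rintro q ⟨q', ⟨j, hj, rfl⟩, rfl⟩
  rw [phi_psum]
  exact Algebra.subset_adjoin ⟨j, 0, by omega, rfl⟩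

/-- the polarization derivation -/
noncomputable def D (n : ℕ) :
    Derivation ℂ (MvPolynomial (Fin n × Bool) ℂ) (MvPolynomial (Fin n × Bool) ℂ) :=
  mkDerivation ℂ (fun q => if q.2 then 0 else X (q.1, true))

lemma D_Xf (n : ℕ) (i : Fin n) : D n (X (i, false)) = X (i, true) := by
  simp [D, mkDerivation_X]

lemma D_Xt (n : ℕ) (i : Fin n) : D n (X (i, true)) = 0 := by
  simp [D, mkDerivation_X]

lemma D_pp (n a b : ℕ) : D n (pp n (a + 1) b) = (a + 1 : ℂ) • pp n a (b + 1) := by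
  unfold pp
  rw [map_sum, Finset.smul_sum]
  refine Finset.sum_congr rfl fun i _ => ?_
  rw [Derivation.leibniz, Derivation.leibniz_pow, Derivation.leibniz_pow, D_Xf, D_Xt,
    smul_zero, smul_zero, smul_zero, zero_add, ← Nat.cast_smul_eq_nsmul ℂ]
  push_cast
  simp only [smul_eq_mul, smul_smul, Nat.add_sub_cancel, mul_smul_comm]
  congr 1
  ring

lemma D_pp0 (n b : ℕ) : D n (pp n 0 b) = 0 := by
  unfold pp
  rw [map_sum]
  refine Finset.sum_eq_zero fun i _ => ?_
  rw [Derivation.leibniz, Derivation.leibniz_pow, Derivation.leibniz_pow, D_Xf, D_Xt]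
  simp

lemma D_mem_A (n : ℕ) {x : MvPolynomial (Fin n × Bool) ℂ} (hx : x ∈ A n) : D n x ∈ A n := by
  induction hx using Algebra.adjoin_induction with
  | mem q hq =>
    obtain ⟨a, b, hab, rfl⟩ := hq
    show D n (pp n a b) ∈ A n
    cases a with
    | zero => rw [D_pp0]; exact zero_mem _
    | succ a =>
      rw [D_pp]
      refine Subalgebra.smul_mem _ (Algebra.subset_adjoin ?_) _
      exact ⟨a, b + 1, by omega, rfl⟩
  | algebraMap r => rw [Derivation.map_algebraMap]; exact zero_mem _
  | add x y hx hy ihx ihy => rw [map_add]; exact add_mem ihx ihy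
  | mul x y hx hy ihx ihy =>
    rw [Derivation.leibniz, smul_eq_mul, smul_eq_mul]
    exact add_mem (mul_mem hx ihy) (mul_mem hy ihx)

lemma pp_mem_A (n a b : ℕ) : pp n a b ∈ A n := by
  induction b generalizing a with
  | zero => exact pp_k0_mem_A n a
  | succ b ih =>
    have h1 : D n (pp n (a + 1) b) ∈ A n := D_mem_A n (ih (a + 1))
    rw [D_pp] at h1
    have h2 : pp n a (b + 1) = ((a : ℂ) + 1)⁻¹ • ((a + 1 : ℂ) • pp n a (b + 1)) := by
      rw [smul_smul, inv_mul_cancel₀ (by exact_mod_cast Nat.succ_ne_zero a), one_smul]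
    rw [h2]
    exact Subalgebra.smul_mem _ h1 _

lemma Afull_le_A (n : ℕ) : Afull n ≤ A n := by
  apply Algebra.adjoin_le
  rintro q ⟨⟨a, b⟩, rfl⟩
  exact pp_mem_A n a b

/-! ### symmetrization part -/

lemma S_comp (n : ℕ) (f : Fin n → ℕ × ℕ) (τ : Equiv.Perm (Fin n)) :
    S n (f ∘ τ) = S n f := by
  unfold S
  exact Fintype.sum_equiv (Equiv.mulLeft τ) _ _ (fun σ => rfl)

lemma M_update (n : ℕ) (G : Fin n → ℕ × ℕ) (j : Fin n) (a b : ℕ) :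
    M n (Function.update G j (G j + (a, b)))
      = X (j, false) ^ a * X (j, true) ^ b * M n G := by
  unfold M
  rw [← Finset.mul_prod_erase Finset.univ _ (Finset.mem_univ j),
    ← Finset.mul_prod_erase Finset.univ
      (fun i => X (i, false) ^ (G i).1 * X (i, true) ^ (G i).2) (Finset.mem_univ j),
    Finset.prod_congr rfl
      (fun i hi => by rw [Function.update_of_ne (Finset.ne_of_mem_erase hi)]),
    Function.update_self]
  simp only [Prod.fst_add, Prod.snd_add]
  rw [pow_add, pow_add]
  ring

lemma pp_mul_S (n a b : ℕ) (f' : Fin n → ℕ × ℕ) :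
    pp n a b * S n f' = ∑ m : Fin n, S n (Function.update f' m (f' m + (a, b))) := by
  have hcomp : ∀ (σ : Equiv.Perm (Fin n)) (j : Fin n),
      (Function.update f' (σ j) (f' (σ j) + (a, b))) ∘ σ
        = Function.update (f' ∘ σ) j (f' (σ j) + (a, b)) := by
    intro σ j
    funext i
    rcases eq_or_ne i j with rfl | h
    · simp
    · rw [Function.comp_apply, Function.update_of_ne h,
        Function.update_of_ne (fun hc => h (σ.injective hc))]
      rfl
  unfold pp S
  rw [Finset.sum_mul]
  simp_rw [Finset.mul_sum]
  conv_lhs => rw [Finset.sum_comm]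
  conv_rhs => rw [Finset.sum_comm]
  refine Finset.sum_congr rfl fun σ _ => ?_
  refine Fintype.sum_bijective σ σ.bijective _ _ fun j => ?_
  rw [hcomp σ j]
  exact (M_update n (f' ∘ σ) j a b).symm

lemma S_mem_aux (n : ℕ) : ∀ (k : ℕ) (f : Fin n → ℕ × ℕ),
    (Finset.univ.filter fun i => f i ≠ (0, 0)).card = k → S n f ∈ Afull n := by
  intro k
  induction k with
  | zero =>
    intro f hf
    have hall : ∀ i, f i = (0, 0) := by
      intro i
      by_contra h
      have hmem : i ∈ Finset.univ.filter fun i => f i ≠ (0, 0) :=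
        Finset.mem_filter.mpr ⟨Finset.mem_univ i, h⟩
      rw [Finset.card_eq_zero] at hf
      exact Finset.notMem_empty i (hf ▸ hmem)
    have hS1 : S n f = (Fintype.card (Equiv.Perm (Fin n))) • (1 : MvPolynomial (Fin n × Bool) ℂ) := by
      unfold S
      rw [Finset.sum_congr rfl fun σ _ => ?_, Finset.sum_const, Finset.card_univ]
      unfold M
      refine Finset.prod_eq_one fun i _ => ?_
      simp [Function.comp, hall]
    rw [hS1]
    exact nsmul_mem (one_mem _) _
  | succ k ih =>
    intro f hf
    have hne : (Finset.univ.filter fun i => f i ≠ (0, 0)).Nonempty := by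
      rw [← Finset.card_pos, hf]; omega
    obtain ⟨i0, hi0⟩ := hne
    have hfi0 : f i0 ≠ (0, 0) := (Finset.mem_filter.mp hi0).2
    set ab := f i0 with hab
    set f' := Function.update f i0 (0, 0) with hf'def
    have hf'i0 : f' i0 = (0, 0) := Function.update_self _ _ _
    have hsupp' : (Finset.univ.filter fun i => f' i ≠ (0, 0))
        = (Finset.univ.filter fun i => f i ≠ (0, 0)).erase i0 := by
      ext i
      simp only [Finset.mem_filter, Finset.mem_erase, Finset.mem_univ, true_and]
      rcases eq_or_ne i i0 with rfl | h
      · simp [hf'i0]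
      · rw [hf'def, Function.update_of_ne h]
        simp [h]
    have hcard' : (Finset.univ.filter fun i => f' i ≠ (0, 0)).card = k := by
      rw [hsupp', Finset.card_erase_of_mem hi0, hf]
      rfl
    have hSf' : S n f' ∈ Afull n := ih f' hcard'
    have hkey := pp_mul_S n ab.1 ab.2 f'
    have habeta : (ab.1, ab.2) = ab := rfl
    rw [habeta] at hkey
    have hsplit : ∑ m : Fin n, S n (Function.update f' m (f' m + ab))
        = (Finset.univ.filter fun m => f' m = (0, 0)).card • S n f
          + ∑ m ∈ Finset.univ.filter (fun m => ¬ f' m = (0, 0)),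
              S n (Function.update f' m (f' m + ab)) := by
      rw [← Finset.sum_filter_add_sum_filter_not Finset.univ (fun m => f' m = (0, 0))]
      congr 1
      rw [← Finset.sum_const]
      refine Finset.sum_congr rfl fun m hm => ?_
      have hm0 : f' m = (0, 0) := (Finset.mem_filter.mp hm).2
      have hupdate : Function.update f' m (f' m + ab) = f ∘ (Equiv.swap i0 m) := by
        funext i
        by_cases him : i = m
        · subst him
          rw [Function.update_self, hm0, Function.comp_apply, Equiv.swap_apply_right, ← hab]
          exact zero_add ab
        · rw [Function.update_of_ne him, Function.comp_apply]
          by_cases hii0 : i = i0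
          · have hmne : m ≠ i0 := fun hc => him (hii0.trans hc.symm)
            rw [hii0, hf'i0, Equiv.swap_apply_left]
            rw [hf'def, Function.update_of_ne hmne] at hm0
            exact hm0.symm
          · rw [Equiv.swap_apply_of_ne_of_ne hii0 him, hf'def, Function.update_of_ne hii0]
      rw [hupdate, S_comp]
    have hi0mem : i0 ∈ Finset.univ.filter fun m => f' m = (0, 0) :=
      Finset.mem_filter.mpr ⟨Finset.mem_univ _, hf'i0⟩
    set z := (Finset.univ.filter fun m => f' m = (0, 0)).card with hz
    have hzpos : 0 < z := Finset.card_pos.mpr ⟨i0, hi0mem⟩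
    have hrest : ∑ m ∈ Finset.univ.filter (fun m => ¬ f' m = (0, 0)),
        S n (Function.update f' m (f' m + ab)) ∈ Afull n := by
      refine Subalgebra.sum_mem _ fun m hm => ?_
      have hm0 : f' m ≠ (0, 0) := (Finset.mem_filter.mp hm).2
      refine ih _ ?_
      have hset : (Finset.univ.filter fun i => Function.update f' m (f' m + ab) i ≠ (0, 0))
          = (Finset.univ.filter fun i => f' i ≠ (0, 0)) := by
        ext i
        simp only [Finset.mem_filter, Finset.mem_univ, true_and]
        rcases eq_or_ne i m with rfl | h
        · rw [Function.update_self]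
          have hne0 : f' i + ab ≠ (0, 0) := by
            intro hc
            apply hm0
            have h1 := congrArg Prod.fst hc
            have h2 := congrArg Prod.snd hc
            simp only [Prod.fst_add, Prod.snd_add] at h1 h2
            exact Prod.ext (Nat.eq_zero_of_add_eq_zero_right h1)
              (Nat.eq_zero_of_add_eq_zero_right h2)
          exact iff_of_true hne0 hm0
        · rw [Function.update_of_ne h]
      rw [hset, hcard']
    have heq : (z : ℂ) • S n f = pp n ab.1 ab.2 * S n f'
        - ∑ m ∈ Finset.univ.filter (fun m => ¬ f' m = (0, 0)),
            S n (Function.update f' m (f' m + ab)) := by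
      rw [Nat.cast_smul_eq_nsmul, hkey, hsplit]
      abel
    have hmemz : (z : ℂ) • S n f ∈ Afull n := by
      rw [heq]
      exact sub_mem (mul_mem (pp_mem_Afull n ab.1 ab.2) hSf') hrest
    have hfin : S n f = (z : ℂ)⁻¹ • ((z : ℂ) • S n f) := by
      rw [smul_smul, inv_mul_cancel₀ (by exact_mod_cast hzpos.ne'), one_smul]
    rw [hfin]
    exact Subalgebra.smul_mem _ hmemz _

lemma S_mem (n : ℕ) (f : Fin n → ℕ × ℕ) : S n f ∈ Afull n :=
  S_mem_aux n _ f rfl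

lemma monomial_eq_M (n : ℕ) (d : Fin n × Bool →₀ ℕ) :
    (monomial d (1 : ℂ)) = M n (fun i => (d (i, false), d (i, true))) := by
  rw [monomial_eq, C_1, one_mul, Finsupp.prod_pow, M, Fintype.prod_prod_type]
  refine Finset.prod_congr rfl fun i _ => ?_
  rw [Fintype.prod_bool, mul_comm]

lemma rename_M (n : ℕ) (f : Fin n → ℕ × ℕ) (σ : Equiv.Perm (Fin n)) :
    rename (fun q : Fin n × Bool => (σ q.1, q.2)) (M n f) = M n (f ∘ σ.symm) := by
  unfold M
  rw [map_prod]
  simp only [map_mul, map_pow, rename_X]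
  exact Fintype.prod_equiv σ _ _ (fun i => by simp)

lemma sym_mem (n : ℕ) (p : MvPolynomial (Fin n × Bool) ℂ) :
    ∑ σ : Equiv.Perm (Fin n), rename (fun q : Fin n × Bool => (σ q.1, q.2)) p ∈ Afull n := by
  induction p using MvPolynomial.induction_on' with
  | add p q hp hq =>
    simp only [map_add, Finset.sum_add_distrib]
    exact add_mem hp hq
  | monomial d a =>
    have key : ∀ σ : Equiv.Perm (Fin n),
        rename (fun q : Fin n × Bool => (σ q.1, q.2)) (monomial d a)
          = a • M n ((fun i => (d (i, false), d (i, true))) ∘ σ.symm) := by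
      intro σ
      have : (monomial d a) = a • monomial d (1 : ℂ) := by
        rw [smul_monomial, smul_eq_mul, mul_one]
      rw [this, map_smul, monomial_eq_M, rename_M]
    rw [Finset.sum_congr rfl fun σ _ => key σ, ← Finset.smul_sum]
    refine Subalgebra.smul_mem _ ?_ _
    have : ∑ σ : Equiv.Perm (Fin n), M n ((fun i => (d (i, false), d (i, true))) ∘ σ.symm)
        = S n (fun i => (d (i, false), d (i, true))) := by
      unfold S
      exact Fintype.sum_equiv (Equiv.inv _) _ _ (fun σ => rfl)
    rw [this]
    exact S_mem n _

end DiagInv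

theorem diagonal_invariants_generated_by_multisymmetric_power_sums
    (n : ℕ) (hn : 1 ≤ n) (p : MvPolynomial (Fin n × Bool) ℂ) :
    (∀ σ : Equiv.Perm (Fin n),
        rename (fun q : Fin n × Bool => (σ q.1, q.2)) p = p) ↔
      p ∈ Algebra.adjoin ℂ
        { q : MvPolynomial (Fin n × Bool) ℂ |
          ∃ a b : ℕ, a + b ≤ n ∧
            q = ∑ i : Fin n, X (i, false) ^ a * X (i, true) ^ b } := by
  constructor
  · intro hp
    have h1 : ∑ σ : Equiv.Perm (Fin n), rename (fun q : Fin n × Bool => (σ q.1, q.2)) p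
        = (Fintype.card (Equiv.Perm (Fin n))) • p := by
      rw [Finset.sum_congr rfl fun σ _ => hp σ, Finset.sum_const, Finset.card_univ]
    have hcard : (Fintype.card (Equiv.Perm (Fin n)) : ℂ) ≠ 0 := by
      exact_mod_cast Nat.cast_ne_zero.mpr Fintype.card_ne_zero
    have h2 := DiagInv.Afull_le_A n (DiagInv.sym_mem n p)
    rw [h1, ← Nat.cast_smul_eq_nsmul ℂ] at h2
    have : p = (Fintype.card (Equiv.Perm (Fin n)) : ℂ)⁻¹ •
        ((Fintype.card (Equiv.Perm (Fin n)) : ℂ) • p) := by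
      rw [smul_smul, inv_mul_cancel₀ hcard, one_smul]
    rw [this]
    exact Subalgebra.smul_mem _ h2 _
  · intro hp σ
    have : p ∈ AlgHom.equalizer (rename (fun q : Fin n × Bool => (σ q.1, q.2)))
        (AlgHom.id ℂ (MvPolynomial (Fin n × Bool) ℂ)) := by
      apply Algebra.adjoin_le ?_ hp
      rintro q ⟨a, b, hab, rfl⟩
      show rename _ _ = _
      rw [map_sum]
      simp only [map_mul, map_pow, rename_X, AlgHom.coe_id, id_eq]
      exact Fintype.sum_equiv σ (fun i => X (σ i, false) ^ a * X (σ i, true) ^ b)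
        (fun i => X (i, false) ^ a * X (i, true) ^ b) (fun i => rfl)
    exact this
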